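/- Let λ ∈ ℂ with |λ| = 1. If n is even, then T(λΔ_m, J_n(0)) = ℂ^{n×m} × ℂ^{m×n}, i.e., the map (S,R) ↦ (λ·S*·Δ_m + J_n(0)·R, R*·J_n(0) + λ·Δ_m·S) with S ∈ ℂ^{m×n}, R ∈ ℂ^{n×m} is surjective. If n is odd, then for every pair (B,A) ∈ ℂ^{n×m} × ℂ^{m×n} there exists exactly one matrix D ∈ ℂ^{n×m} whose nonzero entries are confined to the first row such that (B − D, A) ∈ T(λΔ_m, J_n(0)); that is, ℂ^{n×m} × ℂ^{m×n} = T(λΔ_m, J_n(0)) ⊕_ℝ (V × {0}), where V is the subspace of matrices supported in the first row. -/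

import Mathlib

open Matrix

/-- The `n×n` upper-triangular Jordan block with eigenvalue `l`. -/
noncomputable def Jmat (n : ℕ) (l : ℂ) : Matrix (Fin n) (Fin n) ℂ :=
  Matrix.of fun i j =>
    if (i : ℕ) = (j : ℕ) then l
    else if (j : ℕ) = (i : ℕ) + 1 then 1 else 0

/-- The symmetric matrix `Δ_n`: (1-based) entry `(j,k)` is `1` if `j+k = n+1`,
`i` if `j+k = n+2`, and `0` otherwise. -/
noncomputable def Dmat (n : ℕ) : Matrix (Fin n) (Fin n) ℂ :=
  Matrix.of fun i j =>
    if (i : ℕ) + (j : ℕ) + 1 = n then 1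
    else if (i : ℕ) + (j : ℕ) = n then Complex.I
    else 0

/-- The `2m×2m` block matrix `H_m(l) = [[0, I],[J_m(l), 0]]`. -/
noncomputable def Hmat (m : ℕ) (l : ℂ) : Matrix (Fin m ⊕ Fin m) (Fin m ⊕ Fin m) ℂ :=
  Matrix.fromBlocks 0 1 (Jmat m l) 0

/-- `T(A) = {CᴴA + AC}`, the tangent space to the *congruence class of `A`. -/
def Tset {n : Type*} [Fintype n] (A : Matrix n n ℂ) : Set (Matrix n n ℂ) :=
  {X | ∃ C : Matrix n n ℂ, X = Cᴴ * A + A * C}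

/-- `T(M,N) = {(SᴴM + NR, RᴴN + MS)}`. -/
def Tpair {p q : Type*} [Fintype p] [Fintype q]
    (M : Matrix p p ℂ) (N : Matrix q q ℂ) :
    Set (Matrix q p ℂ × Matrix p q ℂ) :=
  {X | ∃ (S : Matrix p q ℂ) (R : Matrix q p ℂ),
      X = (Sᴴ * M + N * R, Rᴴ * N + M * S)}

section dmatdet

noncomputable def Pm' (n : ℕ) : Matrix (Fin n) (Fin n) ℂ :=
  Matrix.of fun i j => if (i : ℕ) + (j : ℕ) + 1 = n then 1 else 0

noncomputable def Um' (n : ℕ) : Matrix (Fin n) (Fin n) ℂ := 1 + Complex.I • Jmat n 0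

lemma Jmat_apply (n : ℕ) (i j : Fin n) :
    Jmat n 0 i j = if (j : ℕ) = (i : ℕ) + 1 then 1 else 0 := by
  simp only [Jmat, Matrix.of_apply]
  split_ifs with h1 h2 <;> first | rfl | omega

lemma Jmul_apply {m n : ℕ} (X : Matrix (Fin n) (Fin m) ℂ) (i : Fin n) (q : Fin m) :
    (Jmat n 0 * X) i q = if h : (i : ℕ) + 1 < n then X ⟨(i : ℕ) + 1, h⟩ q else 0 := by
  rw [Matrix.mul_apply]
  split
  · next h =>
    rw [Finset.sum_eq_single (⟨(i : ℕ) + 1, h⟩ : Fin n)]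
    · rw [Jmat_apply, if_pos rfl, one_mul]
    · intro b _ hb
      rw [Jmat_apply, if_neg (fun hc => hb (Fin.ext (by simpa using hc))), zero_mul]
    · intro hmem; exact absurd (Finset.mem_univ _) hmem
  · next h =>
    apply Finset.sum_eq_zero
    intro b _
    have := b.isLt
    rw [Jmat_apply, if_neg (by omega), zero_mul]

lemma JHmul_apply {m n : ℕ} (X : Matrix (Fin n) (Fin m) ℂ) (i : Fin n) (q : Fin m) :
    ((Jmat n 0)ᴴ * X) i q
      = if h : 0 < (i : ℕ) then X ⟨(i : ℕ) - 1, by omega⟩ q else 0 := by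
  rw [Matrix.mul_apply]
  have hJH : ∀ b : Fin n, (Jmat n 0)ᴴ i b = if (i : ℕ) = (b : ℕ) + 1 then 1 else 0 := by
    intro b
    rw [Matrix.conjTranspose_apply, Jmat_apply]
    split_ifs <;> simp
  split
  · next h =>
    have hi := i.isLt
    rw [Finset.sum_eq_single (⟨(i : ℕ) - 1, by omega⟩ : Fin n)]
    · rw [hJH, if_pos (by simp; omega), one_mul]
    · intro b _ hb
      rw [hJH, if_neg (fun hc => hb (Fin.ext (by simp; omega))), zero_mul]
    · intro hmem; exact absurd (Finset.mem_univ _) hmem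
  · next h =>
    apply Finset.sum_eq_zero
    intro b _
    rw [hJH, if_neg (by omega), zero_mul]

section core
variable {m n : ℕ} {K : Matrix (Fin m) (Fin m) ℂ}

lemma row_kill (hK : IsUnit K.det) {v : Fin m → ℂ}
    (h : ∀ q, Matrix.vecMul v K q = 0) : v = 0 := by
  have h0 : Matrix.vecMul v K = 0 := funext h
  have : Matrix.vecMul (Matrix.vecMul v K) K⁻¹ = v := by
    rw [Matrix.vecMul_vecMul, Matrix.mul_nonsing_inv _ hK, Matrix.vecMul_one]
  rw [h0, Matrix.zero_vecMul] at this
  exact this.symm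

lemma mulK_apply (R : Matrix (Fin n) (Fin m) ℂ) (j : Fin n) (q : Fin m) :
    (R * K) j q = Matrix.vecMul (R j) K q := by
  rw [Matrix.mul_apply, Matrix.vecMul, dotProduct]

lemma key_eq {R D : Matrix (Fin n) (Fin m) ℂ}
    (hEq : Jmat n 0 * R - (Jmat n 0)ᴴ * (R * K) = D) (i : Fin n) (q : Fin m) :
    (if h : (i : ℕ) + 1 < n then R ⟨(i : ℕ) + 1, h⟩ q else 0)
      - (if h : 0 < (i : ℕ) then (R * K) ⟨(i : ℕ) - 1, by omega⟩ q else 0) = D i q := by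
  have := congrFun (congrFun hEq i) q
  rwa [Matrix.sub_apply, Jmul_apply, JHmul_apply] at this

lemma down_aux (hK : IsUnit K.det) {R D : Matrix (Fin n) (Fin m) ℂ}
    (hEq : Jmat n 0 * R - (Jmat n 0)ᴴ * (R * K) = D)
    (hD : ∀ i : Fin n, 1 ≤ (i : ℕ) → ∀ q, D i q = 0) :
    ∀ s (j : Fin n), (j : ℕ) % 2 = n % 2 → n ≤ (j : ℕ) + s → R j = 0 := by
  intro s
  induction s with
  | zero => intro j hp hs; exact absurd j.isLt (by omega)
  | succ s ih =>
    intro j hp hs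
    have hj := j.isLt
    have hjn : (j : ℕ) + 1 < n := by omega
    apply row_kill hK
    intro q
    have he := key_eq hEq ⟨(j : ℕ) + 1, hjn⟩ q
    rw [hD _ (by simp) q] at he
    rw [dif_pos (by simp : 0 < ((⟨(j : ℕ) + 1, hjn⟩ : Fin n) : ℕ))] at he
    have hidx : (⟨((⟨(j : ℕ) + 1, hjn⟩ : Fin n) : ℕ) - 1, by omega⟩ : Fin n) = j :=
      Fin.ext (by simp)
    rw [hidx] at he
    rw [← mulK_apply]
    split at he
    · next hc =>
      have h0 : R ⟨((⟨(j : ℕ) + 1, hjn⟩ : Fin n) : ℕ) + 1, hc⟩ = 0 :=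
        ih ⟨((⟨(j : ℕ) + 1, hjn⟩ : Fin n) : ℕ) + 1, hc⟩ (by simp; omega) (by simp; omega)
      rw [h0] at he
      simpa using he
    · next hc =>
      simpa using he


lemma eqA {R D : Matrix (Fin n) (Fin m) ℂ}
    (hEq : Jmat n 0 * R - (Jmat n 0)ᴴ * (R * K) = D)
    (i : ℕ) (h0 : i + 1 < n) (h1 : 0 < i) (q : Fin m) :
    R ⟨i + 1, h0⟩ q - (R * K) ⟨i - 1, by omega⟩ q = D ⟨i, by omega⟩ q := by
  have he := key_eq hEq ⟨i, by omega⟩ q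
  rw [dif_pos h0, dif_pos h1] at he
  exact he

lemma eqB {R D : Matrix (Fin n) (Fin m) ℂ}
    (hEq : Jmat n 0 * R - (Jmat n 0)ᴴ * (R * K) = D)
    (h0 : 1 < n) (q : Fin m) :
    R ⟨1, h0⟩ q = D ⟨0, by omega⟩ q := by
  have he := key_eq hEq ⟨0, by omega⟩ q
  rw [dif_pos h0, dif_neg (by omega : ¬ (0:ℕ) < 0)] at he
  simpa using he

lemma eqC {R D : Matrix (Fin n) (Fin m) ℂ}
    (hEq : Jmat n 0 * R - (Jmat n 0)ᴴ * (R * K) = D)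
    (i : ℕ) (hin : i < n) (h0 : ¬ i + 1 < n) (h1 : 0 < i) (q : Fin m) :
    -(R * K) ⟨i - 1, by omega⟩ q = D ⟨i, by omega⟩ q := by
  have he := key_eq hEq ⟨i, hin⟩ q
  rw [dif_neg h0, dif_pos h1] at he
  simpa using he

lemma eqD {R D : Matrix (Fin n) (Fin m) ℂ}
    (hEq : Jmat n 0 * R - (Jmat n 0)ᴴ * (R * K) = D)
    (hn : n = 1) (q : Fin m) : D ⟨0, by omega⟩ q = 0 := by
  have he := key_eq hEq ⟨0, by omega⟩ q
  rw [dif_neg (by omega : ¬ (0:ℕ) + 1 < n), dif_neg (by omega : ¬ (0:ℕ) < 0)] at he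
  simpa using he.symm
lemma up_aux (hK : IsUnit K.det) {R D : Matrix (Fin n) (Fin m) ℂ} {b : ℕ}
    (hEq : Jmat n 0 * R - (Jmat n 0)ᴴ * (R * K) = D)
    (hD : ∀ i : Fin n, 1 ≤ (i : ℕ) → ∀ q, D i q = 0)
    (base : ∀ j : Fin n, (j : ℕ) ≤ 1 → (j : ℕ) % 2 = b → R j = 0) :
    ∀ j : Fin n, (j : ℕ) % 2 = b → R j = 0 := by
  suffices h : ∀ s (j : Fin n), (j : ℕ) ≤ s → (j : ℕ) % 2 = b → R j = 0 by
    intro j hp; exact h (j : ℕ) j le_rfl hp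
  intro s
  induction s with
  | zero => intro j hjs hp; exact base j (by omega) hp
  | succ s ih =>
    intro j hjs hp
    by_cases hj1 : (j : ℕ) ≤ 1
    · exact base j hj1 hp
    · have hj := j.isLt
      funext q
      have he := key_eq hEq ⟨(j : ℕ) - 1, by omega⟩ q
      rw [hD _ (by simp; omega) q] at he
      rw [dif_pos (by show (j:ℕ) - 1 + 1 < n; omega)] at he
      rw [dif_pos (by show 0 < (j:ℕ) - 1; omega)] at he
      have hidx1 : (⟨(j : ℕ) - 1 + 1, by omega⟩ : Fin n) = j := Fin.ext (by simp; omega)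
      rw [hidx1] at he
      have h0 : R ⟨(j : ℕ) - 1 - 1, by omega⟩ = 0 :=
        ih ⟨(j : ℕ) - 1 - 1, by omega⟩ (by simp; omega) (by simp; omega)
      rw [mulK_apply, h0] at he
      simpa using he


lemma inj_even (hK : IsUnit K.det) (hn : n % 2 = 0) {R : Matrix (Fin n) (Fin m) ℂ}
    (hEq : Jmat n 0 * R - (Jmat n 0)ᴴ * (R * K) = 0) : R = 0 := by
  have hD : ∀ i : Fin n, 1 ≤ (i : ℕ) → ∀ q, (0 : Matrix (Fin n) (Fin m) ℂ) i q = 0 := by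
    intro i _ q; rfl
  have hodd : ∀ j : Fin n, (j : ℕ) % 2 = 1 → R j = 0 := by
    apply up_aux hK hEq hD
    intro j hj1 hjp
    have hj := j.isLt
    have h1n : 1 < n := by omega
    have hj' : j = (⟨1, h1n⟩ : Fin n) := Fin.ext (by simp; omega)
    funext q
    rw [hj', eqB hEq h1n q]
    rfl
  have heven : ∀ j : Fin n, (j : ℕ) % 2 = 0 → R j = 0 := by
    intro j hp
    exact down_aux hK hEq hD n j (by omega) (by have := j.isLt; omega)
  funext j q
  rcases Nat.even_or_odd (j : ℕ) with h | h
  · rw [heven j (Nat.even_iff.mp h)]; rfl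
  · rw [hodd j (Nat.odd_iff.mp h)]; rfl

lemma unique_odd (hK : IsUnit K.det) (hn : n % 2 = 1) {R D : Matrix (Fin n) (Fin m) ℂ}
    (hD : ∀ p : Fin n, ∀ q, D p q ≠ 0 → (p : ℕ) = 0)
    (hEq : Jmat n 0 * R - (Jmat n 0)ᴴ * (R * K) = D) : D = 0 := by
  have hD' : ∀ i : Fin n, 1 ≤ (i : ℕ) → ∀ q, D i q = 0 := by
    intro i hi q
    by_contra hc
    exact absurd (hD i q hc) (by omega)
  have hodd : ∀ j : Fin n, (j : ℕ) % 2 = 1 → R j = 0 := by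
    intro j hp
    exact down_aux hK hEq hD' n j (by omega) (by have := j.isLt; omega)
  funext p q
  show D p q = 0
  by_cases hp0 : 1 ≤ (p : ℕ)
  · exact hD' p hp0 q
  · have hp' : p = (⟨0, by omega⟩ : Fin n) := Fin.ext (by simp; omega)
    by_cases h1n : 1 < n
    · rw [hp', ← eqB hEq h1n q]
      have := hodd ⟨1, h1n⟩ (by simp)
      rw [this]; rfl
    · have hn1 : n = 1 := by have := p.isLt; omega
      rw [hp']
      exact eqD hEq hn1 q

lemma inj_odd (hK : IsUnit K.det) (hn : n % 2 = 1) {R D : Matrix (Fin n) (Fin m) ℂ}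
    (hD : ∀ p : Fin n, ∀ q, D p q ≠ 0 → (p : ℕ) = 0)
    (hR0 : ∀ j : Fin n, (j : ℕ) = 0 → R j = 0)
    (hEq : Jmat n 0 * R - (Jmat n 0)ᴴ * (R * K) = D) : R = 0 ∧ D = 0 := by
  have hD0 : D = 0 := unique_odd hK hn hD hEq
  subst hD0
  have hD' : ∀ i : Fin n, 1 ≤ (i : ℕ) → ∀ q, (0 : Matrix (Fin n) (Fin m) ℂ) i q = 0 := by
    intro i _ q; rfl
  have hodd : ∀ j : Fin n, (j : ℕ) % 2 = 1 → R j = 0 := by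
    intro j hp
    exact down_aux hK hEq hD' n j (by omega) (by have := j.isLt; omega)
  have heven : ∀ j : Fin n, (j : ℕ) % 2 = 0 → R j = 0 := by
    apply up_aux hK hEq hD'
    intro j hj1 hjp
    exact hR0 j (by omega)
  refine ⟨?_, rfl⟩
  funext j q
  rcases Nat.even_or_odd (j : ℕ) with h | h
  · rw [heven j (Nat.even_iff.mp h)]; rfl
  · rw [hodd j (Nat.odd_iff.mp h)]; rfl



end core

lemma Pm'_mul_Pm' (n : ℕ) : Pm' n * Pm' n = 1 := by
  ext i j
  rw [Matrix.mul_apply]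
  have hi := i.isLt; have hj := j.isLt
  rw [Finset.sum_eq_single (⟨n - 1 - (i : ℕ), by omega⟩ : Fin n)]
  · simp only [Pm', Matrix.of_apply, Matrix.one_apply, Fin.ext_iff]
    split_ifs <;> first | ring1 | (exfalso; omega)
  · intro b _ hb
    have hb' : (b : ℕ) ≠ n - 1 - (i : ℕ) := fun hc => hb (Fin.ext (by simpa using hc))
    simp only [Pm', Matrix.of_apply]
    rw [if_neg (by omega)]; ring
  · intro hmem; exact absurd (Finset.mem_univ _) hmem

lemma Dmat_factor (n : ℕ) : Dmat n = Pm' n * Um' n := by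
  ext i j
  rw [Matrix.mul_apply]
  have hi := i.isLt; have hj := j.isLt
  rw [Finset.sum_eq_single (⟨n - 1 - (i : ℕ), by omega⟩ : Fin n)]
  · simp only [Pm', Um', Matrix.of_apply, Matrix.add_apply, Matrix.smul_apply,
      Matrix.one_apply, Jmat_apply, Dmat, smul_eq_mul, Fin.ext_iff]
    split_ifs <;> first | ring1 | (exfalso; omega)
  · intro b _ hb
    have hb' : (b : ℕ) ≠ n - 1 - (i : ℕ) := fun hc => hb (Fin.ext (by simpa using hc))
    simp only [Pm', Matrix.of_apply]
    rw [if_neg (by omega)]; ring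
  · intro hmem; exact absurd (Finset.mem_univ _) hmem

lemma isUnit_det_Dmat (n : ℕ) : IsUnit (Dmat n).det := by
  rw [Dmat_factor, Matrix.det_mul]
  apply IsUnit.mul
  · exact IsUnit.of_mul_eq_one _
      (by rw [← Matrix.det_mul, Pm'_mul_Pm', Matrix.det_one])
  · have hU : (Um' n).det = 1 := by
      rw [Matrix.det_of_upperTriangular (M := Um' n) ?_]
      · apply Finset.prod_eq_one
        intro i _
        simp [Um', Jmat_apply]
      · intro i j hij
        rw [id, id, Fin.lt_def] at hij
        simp only [Um', Matrix.add_apply, Matrix.one_apply, Matrix.smul_apply, Jmat_apply,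
          smul_eq_mul, Fin.ext_iff]
        rw [if_neg (by omega), if_neg (by omega)]
        ring
    rw [hU]; exact isUnit_one


end dmatdet

section maps
variable {m n : ℕ}

noncomputable def Lmap (K : Matrix (Fin m) (Fin m) ℂ) :
    Matrix (Fin n) (Fin m) ℂ →ₗ[ℂ] Matrix (Fin n) (Fin m) ℂ where
  toFun R := Jmat n 0 * R - (Jmat n 0)ᴴ * (R * K)
  map_add' R S := by
    simp only [Matrix.mul_add, Matrix.add_mul]
    abel
  map_smul' c R := by
    simp only [Matrix.mul_smul, Matrix.smul_mul, RingHom.id_apply, smul_sub]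

noncomputable def Zmap : Matrix (Fin n) (Fin m) ℂ →ₗ[ℂ] Matrix (Fin n) (Fin m) ℂ where
  toFun R := Matrix.of fun i q => if (i : ℕ) = 0 then 0 else R i q
  map_add' R S := by
    ext i q
    simp only [Matrix.of_apply, Matrix.add_apply]
    split <;> simp
  map_smul' c R := by
    ext i q
    simp only [Matrix.of_apply, Matrix.smul_apply, RingHom.id_apply, smul_eq_mul]
    split <;> simp

noncomputable def Imap : Matrix (Fin n) (Fin m) ℂ →ₗ[ℂ] Matrix (Fin n) (Fin m) ℂ where
  toFun R := Matrix.of fun i q => if (i : ℕ) = 0 then R i q else 0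
  map_add' R S := by
    ext i q
    simp only [Matrix.of_apply, Matrix.add_apply]
    split <;> simp
  map_smul' c R := by
    ext i q
    simp only [Matrix.of_apply, Matrix.smul_apply, RingHom.id_apply, smul_eq_mul]
    split <;> simp

lemma surj_even {K : Matrix (Fin m) (Fin m) ℂ} (hK : IsUnit K.det) (hn : n % 2 = 0) :
    Function.Surjective (Lmap K : Matrix (Fin n) (Fin m) ℂ →ₗ[ℂ] Matrix (Fin n) (Fin m) ℂ) := by
  rw [← LinearMap.injective_iff_surjective]
  intro a b hab
  have h0 : Lmap K (a - b) = 0 := by rw [map_sub, hab, sub_self]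
  have h1 : Jmat n 0 * (a - b) - (Jmat n 0)ᴴ * ((a - b) * K) = 0 := h0
  exact sub_eq_zero.mp (inj_even hK hn h1)

lemma Imap_apply {m n : ℕ} (R : Matrix (Fin n) (Fin m) ℂ) (i : Fin n) (q : Fin m) :
    Imap R i q = if (i : ℕ) = 0 then R i q else 0 := rfl

lemma Zmap_apply {m n : ℕ} (R : Matrix (Fin n) (Fin m) ℂ) (i : Fin n) (q : Fin m) :
    Zmap R i q = if (i : ℕ) = 0 then 0 else R i q := rfl

lemma surj_odd {K : Matrix (Fin m) (Fin m) ℂ} (hK : IsUnit K.det) (hn : n % 2 = 1) :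
    Function.Surjective ((Lmap K ∘ₗ Zmap + Imap :
      Matrix (Fin n) (Fin m) ℂ →ₗ[ℂ] Matrix (Fin n) (Fin m) ℂ)) := by
  rw [← LinearMap.injective_iff_surjective]
  intro a b hab
  have h0 : (Lmap K ∘ₗ Zmap + Imap : Matrix (Fin n) (Fin m) ℂ →ₗ[ℂ]
      Matrix (Fin n) (Fin m) ℂ) (a - b) = 0 := by rw [map_sub, hab, sub_self]
  set c := a - b with hc
  have h0' : Lmap K (Zmap c) + Imap c = 0 := h0
  have h1 : Jmat n 0 * (Zmap c) - (Jmat n 0)ᴴ * ((Zmap c) * K) = -(Imap c) :=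
    eq_neg_of_add_eq_zero_left h0'
  have hD : ∀ p : Fin n, ∀ q : Fin m, (-(Imap c)) p q ≠ 0 → (p : ℕ) = 0 := by
    intro p q hne
    by_contra hc0
    apply hne
    show -(Imap c p q) = 0
    rw [Imap_apply, if_neg hc0, neg_zero]
  have hR0 : ∀ j : Fin n, (j : ℕ) = 0 → Zmap c j = 0 := by
    intro j hj
    funext q
    rw [Zmap_apply, if_pos hj]
    rfl
  obtain ⟨hZ, hI⟩ := inj_odd hK hn hD hR0 h1
  have hI' : Imap c = 0 := by rwa [neg_eq_zero] at hI
  have hc0 : c = 0 := by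
    funext i q
    have e1 := congrFun (congrFun hZ i) q
    have e2 := congrFun (congrFun hI' i) q
    rw [Zmap_apply] at e1
    rw [Imap_apply] at e2
    show c i q = 0
    by_cases h : (i : ℕ) = 0
    · rw [if_pos h] at e2; exact e2
    · rw [if_neg h] at e1; exact e1
  exact sub_eq_zero.mp hc0

end maps

section klem
variable (m : ℕ) (l : ℂ)

lemma isUnit_det_M (hl : l ≠ 0) : IsUnit ((l • Dmat m) : Matrix (Fin m) (Fin m) ℂ).det := by
  rw [Matrix.det_smul]
  exact (isUnit_iff_ne_zero.mpr (pow_ne_zero _ hl)).mul (isUnit_det_Dmat m)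

lemma isUnit_det_MH (hl : l ≠ 0) :
    IsUnit (((l • Dmat m) : Matrix (Fin m) (Fin m) ℂ)ᴴ).det := by
  rw [Matrix.det_conjTranspose]
  exact isUnit_iff_ne_zero.mpr (star_ne_zero.mpr (isUnit_det_M m l hl).ne_zero)

lemma isUnit_det_K (hl : l ≠ 0) :
    IsUnit ((((l • Dmat m) : Matrix (Fin m) (Fin m) ℂ)ᴴ)⁻¹ * (l • Dmat m)).det := by
  rw [Matrix.det_mul]
  exact (Matrix.isUnit_nonsing_inv_det _ (isUnit_det_MH m l hl)).mul (isUnit_det_M m l hl)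

end klem

/-- For `|λ| = 1`: if `n` is even then `T(λΔ_m, J_n(0)) = ℂ^{n×m} × ℂ^{m×n}`;
if `n` is odd then `ℂ^{n×m} × ℂ^{m×n} = T(λΔ_m, J_n(0)) ⊕_ℝ (V × {0})`, where
`V` consists of the matrices supported in the first row. -/
theorem stmt19 (m n : ℕ) (l : ℂ) (hl : ‖l‖ = 1) :
    (n % 2 = 0 →
      ∀ (B : Matrix (Fin n) (Fin m) ℂ) (A : Matrix (Fin m) (Fin n) ℂ),
        ∃ (S : Matrix (Fin m) (Fin n) ℂ) (R : Matrix (Fin n) (Fin m) ℂ),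
          B = Sᴴ * (l • Dmat m) + Jmat n 0 * R ∧
          A = Rᴴ * Jmat n 0 + (l • Dmat m) * S) ∧
    (n % 2 = 1 →
      ∀ (B : Matrix (Fin n) (Fin m) ℂ) (A : Matrix (Fin m) (Fin n) ℂ),
        ∃! D : Matrix (Fin n) (Fin m) ℂ,
          (∀ (p : Fin n) (q : Fin m), D p q ≠ 0 → (p : ℕ) = 0) ∧
          (B - D, A) ∈ Tpair (l • Dmat m) (Jmat n 0)) := by
  have hl0 : l ≠ 0 := by
    intro h
    rw [h] at hl
    simp at hl
  set M : Matrix (Fin m) (Fin m) ℂ := l • Dmat m with hM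
  set T : Matrix (Fin n) (Fin n) ℂ := Jmat n 0 with hT
  set K : Matrix (Fin m) (Fin m) ℂ := (Mᴴ)⁻¹ * M with hKdef
  have hMdet : IsUnit M.det := isUnit_det_M m l hl0
  have hMHdet : IsUnit (Mᴴ).det := isUnit_det_MH m l hl0
  have hKdet : IsUnit K.det := isUnit_det_K m l hl0
  have hMK : Mᴴ * K = M := Matrix.mul_nonsing_inv_cancel_left (Mᴴ) M hMHdet
  -- from equations to L : if A = Rᴴ*T + M*S then Sᴴ*M = (Aᴴ - Tᴴ*R)*K
  have keyS : ∀ (S : Matrix (Fin m) (Fin n) ℂ) (R : Matrix (Fin n) (Fin m) ℂ)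
      (A : Matrix (Fin m) (Fin n) ℂ), A = Rᴴ * T + M * S →
      Sᴴ * M = (Aᴴ - Tᴴ * R) * K := by
    intro S R A hA
    have h2' : M * S = A - Rᴴ * T := by rw [hA]; abel
    have h3 : Sᴴ * Mᴴ = Aᴴ - Tᴴ * R := by
      rw [← Matrix.conjTranspose_mul, h2', Matrix.conjTranspose_sub,
        Matrix.conjTranspose_mul, Matrix.conjTranspose_conjTranspose]
    rw [← h3, Matrix.mul_assoc, hMK]
  constructor
  · -- even case
    intro hn B A
    obtain ⟨R, hR⟩ := surj_even hKdet hn (B - Aᴴ * K)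
    have hR' : T * R - Tᴴ * (R * K) = B - Aᴴ * K := hR
    refine ⟨M⁻¹ * (A - Rᴴ * T), R, ?_, ?_⟩
    · -- B = Sᴴ * M + T * R
      have h1 : (M⁻¹ * (A - Rᴴ * T))ᴴ * M = (Aᴴ - Tᴴ * R) * K := by
        apply keyS
        rw [Matrix.mul_nonsing_inv_cancel_left _ _ hMdet]
        abel
      rw [h1, Matrix.sub_mul, Matrix.mul_assoc]
      have hB : B = T * R - Tᴴ * (R * K) + Aᴴ * K := by rw [hR']; abel
      rw [hB]; abel
    · rw [Matrix.mul_nonsing_inv_cancel_left _ _ hMdet]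
      abel
  · -- odd case
    intro hn B A
    obtain ⟨R₁, hR₁⟩ := surj_odd hKdet hn (B - Aᴴ * K)
    have hR₁' : T * (Zmap R₁) - Tᴴ * ((Zmap R₁) * K) + Imap R₁ = B - Aᴴ * K := hR₁
    set D : Matrix (Fin n) (Fin m) ℂ := Imap R₁ with hD
    set R : Matrix (Fin n) (Fin m) ℂ := Zmap R₁ with hRdef
    have hsupp : ∀ (p : Fin n) (q : Fin m), D p q ≠ 0 → (p : ℕ) = 0 := by
      intro p q hne
      by_contra hc0
      apply hne
      show Imap R₁ p q = 0
      rw [Imap_apply, if_neg hc0]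
    refine ⟨D, ⟨hsupp, ?_⟩, ?_⟩
    · -- membership in Tpair
      refine ⟨M⁻¹ * (A - Rᴴ * T), R, ?_⟩
      have hgoal2 : A = Rᴴ * T + M * (M⁻¹ * (A - Rᴴ * T)) := by
        rw [Matrix.mul_nonsing_inv_cancel_left _ _ hMdet]
        abel
      have h1 : (M⁻¹ * (A - Rᴴ * T))ᴴ * M = (Aᴴ - Tᴴ * R) * K := keyS _ _ _ hgoal2
      have hfst : B - D = (M⁻¹ * (A - Rᴴ * T))ᴴ * M + T * R := by
        rw [h1, Matrix.sub_mul, Matrix.mul_assoc]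
        have hBD : B - D = T * R - Tᴴ * (R * K) + Aᴴ * K := by
          calc B - D = ((T * R - Tᴴ * (R * K) + D) + Aᴴ * K) - D := by rw [hR₁']; abel
          _ = T * R - Tᴴ * (R * K) + Aᴴ * K := by abel
        rw [hBD]; abel
      simp only [Prod.mk.injEq]
      exact ⟨hfst, hgoal2⟩
    · rintro D' ⟨hsupp', S', R', hpair⟩
      have hfst : B - D' = S'ᴴ * M + T * R' := congrArg Prod.fst hpair
      have hsnd : A = R'ᴴ * T + M * S' := congrArg Prod.snd hpair
      have hS'M : S'ᴴ * M = (Aᴴ - Tᴴ * R') * K := keyS _ _ _ hsnd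
      have hq' : T * R' - Tᴴ * (R' * K) = (B - D') - Aᴴ * K := by
        rw [hfst, hS'M, Matrix.sub_mul, Matrix.mul_assoc]
        abel
      have hq0 : T * R - Tᴴ * (R * K) = (B - D) - Aᴴ * K := by
        calc T * R - Tᴴ * (R * K) = (T * R - Tᴴ * (R * K) + D) - D := by abel
        _ = (B - Aᴴ * K) - D := by rw [hR₁']
        _ = (B - D) - Aᴴ * K := by abel
      have hdiff : T * (R' - R) - Tᴴ * ((R' - R) * K) = D - D' := by
        calc T * (R' - R) - Tᴴ * ((R' - R) * K)
            = (T * R' - Tᴴ * (R' * K)) - (T * R - Tᴴ * (R * K)) := by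
              rw [Matrix.mul_sub, Matrix.sub_mul, Matrix.mul_sub]
              abel
        _ = ((B - D') - Aᴴ * K) - ((B - D) - Aᴴ * K) := by rw [hq', hq0]
        _ = D - D' := by abel
      have hsupp2 : ∀ (p : Fin n) (q : Fin m), (D - D') p q ≠ 0 → (p : ℕ) = 0 := by
        intro p q hne
        by_contra hc0
        apply hne
        have e1 : D p q = 0 := by
          show Imap R₁ p q = 0
          rw [Imap_apply, if_neg hc0]
        have e2 : D' p q = 0 := by
          by_contra he
          exact hc0 (hsupp' p q he)
        show D p q - D' p q = 0
        rw [e1, e2, sub_zero]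
      have hz : D - D' = 0 := unique_odd hKdet hn hsupp2 hdiff
      have h := sub_eq_zero.mp hz
      exact h.symm
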